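/- In the transfinite ranking construction on the run DAG, if a vertex has successor-ordinal rank α+1, then there exists a finite maximal path from that vertex ending in a vertex of rank λ+1 for some limit ordinal λ with floor(α+1) ≤ λ, where floor(β) is the largest limit ordinal strictly smaller than β (for successor β) and a maximal path always steps to a maximal-rank successor. -/

import Mathlib

open Ordinal in
/-- The transfinite sequence of DAGs: `G 0 = G0`, successor stages remove dead ends,
limit stages remove the vertices that are inert in `H λ = ⋂_{β<λ} G β`. -/
noncomputable def Gseq {V : Type*} (E : V → V → Prop) (acc : V → Prop) (G0 : Set V) :
    Ordinal → Set V := fun o =>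
  Ordinal.limitRecOn o G0
    (fun _ Gα => {v ∈ Gα | ∃ u, E v u ∧ u ∈ Gα})
    (fun o _ ih =>
      {v | (∀ β (h : β < o), v ∈ ih β h) ∧
        ∃ u, Relation.ReflTransGen (fun x y => E x y ∧ ∀ β (h : β < o), y ∈ ih β h) v u ∧
          acc u})

/-- `H α = ⋂_{β<α} G β`. -/
noncomputable def Hseq {V : Type*} (E : V → V → Prop) (acc : V → Prop) (G0 : Set V)
    (o : Ordinal) : Set V :=
  {v | ∀ β < o, v ∈ Gseq E acc G0 β}

/-- The rank of a vertex: `sup {α < ω² | v ∈ H α}`. -/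
noncomputable def rankOf {V : Type*} (E : V → V → Prop) (acc : V → Prop) (G0 : Set V)
    (v : V) : Ordinal :=
  sSup {α | α < Ordinal.omega0 * Ordinal.omega0 ∧ v ∈ Hseq E acc G0 α}

/-- `floor α`: the largest limit ordinal (0 counting as a limit) strictly below `α`. -/
noncomputable def ofloor (α : Ordinal) : Ordinal :=
  sSup {l : Ordinal | (l = 0 ∨ Order.IsSuccLimit l) ∧ l < α}

/-- Edges of the run DAG of an automaton over the word `w`. -/
def dagEdge {Q A : Type*} (Δ : Q → A → Q → Prop) (w : ℕ → A) :
    Q × ℕ → Q × ℕ → Prop := fun v u => u.2 = v.2 + 1 ∧ Δ v.1 (w v.2) u.1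

/-- The run DAG from state `q0` over word `w`: all vertices reachable from `(q0, 0)`. -/
def runDag {Q A : Type*} (Δ : Q → A → Q → Prop) (w : ℕ → A) (q0 : Q) : Set (Q × ℕ) :=
  {v | Relation.ReflTransGen (dagEdge Δ w) (q0, 0) v}

/-- A vertex of the run DAG is accepting iff its state component is accepting. -/
def dagAcc {Q : Type*} (F : Set Q) : Q × ℕ → Prop := fun v => v.1 ∈ F


section AuxLemmas

open Ordinal

universe u v

variable {V : Type*} (E : V → V → Prop) (acc : V → Prop) (G0 : Set V)

lemma Gseq_zero : Gseq E acc G0 (0 : Ordinal.{u}) = G0 := by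
  unfold Gseq; rw [Ordinal.limitRecOn_zero]

lemma Gseq_succ (o : Ordinal.{u}) :
    Gseq E acc G0 (o + 1) =
      {v ∈ Gseq E acc G0 o | ∃ u, E v u ∧ u ∈ Gseq E acc G0 o} := by
  unfold Gseq
  rw [Ordinal.add_one_eq_succ, Ordinal.limitRecOn_succ]

lemma Gseq_limit_eq {o : Ordinal.{u}} (ho : Order.IsSuccLimit o) :
    Gseq E acc G0 o = {v | (∀ β < o, v ∈ Gseq E acc G0 β) ∧
      ∃ u, Relation.ReflTransGen
        (fun x y => E x y ∧ ∀ β < o, y ∈ Gseq E acc G0 β) v u ∧ acc u} := by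
  unfold Gseq
  rw [Ordinal.limitRecOn_limit _ _ _ _ ho]

lemma Gseq_anti : ∀ γ : Ordinal.{u}, ∀ β ≤ γ, Gseq E acc G0 γ ⊆ Gseq E acc G0 β := by
  intro γ
  induction γ using Ordinal.induction with
  | h γ IH =>
    intro β hβ
    rcases eq_or_lt_of_le hβ with rfl | hlt
    · exact subset_rfl
    rcases Ordinal.zero_or_succ_or_isSuccLimit γ with h0 | ⟨δ, rfl⟩ | hlim
    · exact absurd (h0 ▸ hlt) ((zero_le : (0 : Ordinal) ≤ β).not_gt)
    · have hs : Gseq E acc G0 (Order.succ δ) ⊆ Gseq E acc G0 δ := by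
        rw [← Ordinal.add_one_eq_succ, Gseq_succ]
        exact fun v hv => hv.1
      exact hs.trans (IH δ (Order.lt_succ δ) β (Order.lt_succ_iff.mp hlt))
    · intro x hx
      rw [Gseq_limit_eq E acc G0 hlim] at hx
      exact hx.1 β hlt

lemma Gseq_lift : ∀ o : Ordinal.{u}, Gseq E acc G0 (Ordinal.lift.{v} o) = Gseq E acc G0 o := by
  intro o
  induction o using Ordinal.induction with
  | h o IH =>
    rcases Ordinal.zero_or_succ_or_isSuccLimit o with rfl | ⟨δ, rfl⟩ | hlim
    · rw [Ordinal.lift_zero, Gseq_zero, Gseq_zero]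
    · rw [Ordinal.lift_succ, ← Ordinal.add_one_eq_succ, ← Ordinal.add_one_eq_succ,
        Gseq_succ, Gseq_succ, IH δ (Order.lt_succ δ)]
    · have hlim' : Order.IsSuccLimit (Ordinal.lift.{v} o) := Ordinal.isSuccLimit_lift.mpr hlim
      have hmem : ∀ x : V, (∀ β < Ordinal.lift.{v} o, x ∈ Gseq E acc G0 β) ↔
          (∀ β < o, x ∈ Gseq E acc G0 β) := by
        intro x
        constructor
        · intro h β hβ
          rw [← IH β hβ]
          exact h _ (Ordinal.lift_lt.mpr hβ)
        · intro h β hβ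
          obtain ⟨β', hβ', rfl⟩ := Ordinal.lt_lift_iff.mp hβ
          rw [IH β' hβ']
          exact h β' hβ'
      rw [Gseq_limit_eq E acc G0 hlim', Gseq_limit_eq E acc G0 hlim]
      ext x
      simp only [Set.mem_setOf_eq]
      constructor
      · rintro ⟨h1, u, hu, hacc⟩
        exact ⟨(hmem x).mp h1, u,
          Relation.ReflTransGen.mono (fun a b hab => ⟨hab.1, (hmem b).mp hab.2⟩) _ _ hu, hacc⟩
      · rintro ⟨h1, u, hu, hacc⟩
        exact ⟨(hmem x).mpr h1, u,
          Relation.ReflTransGen.mono (fun a b hab => ⟨hab.1, (hmem b).mpr hab.2⟩) _ _ hu, hacc⟩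

lemma Hseq_lift (o : Ordinal.{u}) (x : V) :
    x ∈ Hseq E acc G0 (Ordinal.lift.{v} o) ↔ x ∈ Hseq E acc G0 o := by
  constructor
  · intro h β hβ
    rw [← Gseq_lift E acc G0 β]
    exact h _ (Ordinal.lift_lt.mpr hβ)
  · intro h β hβ
    obtain ⟨β', hβ', rfl⟩ := Ordinal.lt_lift_iff.mp hβ
    rw [Gseq_lift E acc G0 β']
    exact h β' hβ'

lemma omega2_pos : (0 : Ordinal.{u}) < omega0 * omega0 :=
  mul_pos omega0_pos omega0_pos

lemma rankSet_nonempty (x : V) :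
    {α : Ordinal.{u} | α < omega0 * omega0 ∧ x ∈ Hseq E acc G0 α}.Nonempty :=
  ⟨0, omega2_pos, fun β hβ => absurd hβ ((zero_le : (0 : Ordinal) ≤ β).not_gt)⟩

lemma rankSet_bdd (x : V) :
    BddAbove {α : Ordinal.{u} | α < omega0 * omega0 ∧ x ∈ Hseq E acc G0 α} :=
  ⟨omega0 * omega0, fun _ hx => hx.1.le⟩

lemma rank_le_of_not_mem (x : V) (α : Ordinal.{u}) (hx : x ∉ Gseq E acc G0 α) :
    rankOf E acc G0 x ≤ α := by
  apply csSup_le (rankSet_nonempty E acc G0 x)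
  intro b hb
  by_contra h
  push_neg at h
  exact hx (hb.2 α h)

lemma rank_ge_of_mem (x : V) (α : Ordinal.{u}) (hα : α < omega0 * omega0)
    (hx : x ∈ Hseq E acc G0 α) : α ≤ rankOf E acc G0 x :=
  le_csSup (rankSet_bdd E acc G0 x) ⟨hα, hx⟩

/-- Transfer an ordinal stage `< ω²` to another universe, preserving membership in
`Hseq` and `Gseq`. -/
lemma stage_transfer (c : Ordinal.{u}) (hc : c < omega0 * omega0) :
    ∃ c' : Ordinal.{v}, c' < omega0 * omega0 ∧
      (∀ x : V, x ∈ Hseq E acc G0 c' ↔ x ∈ Hseq E acc G0 c) ∧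
      (∀ x : V, x ∈ Gseq E acc G0 c' ↔ x ∈ Gseq E acc G0 c) := by
  have h1 : Ordinal.lift.{v} c <
      Ordinal.lift.{u} ((omega0 : Ordinal.{v}) * (omega0 : Ordinal.{v})) := by
    have h2 : Ordinal.lift.{v} c <
        Ordinal.lift.{v} ((omega0 : Ordinal.{u}) * (omega0 : Ordinal.{u})) :=
      Ordinal.lift_lt.mpr hc
    simpa only [Ordinal.lift_mul, Ordinal.lift_omega0] using h2
  obtain ⟨c', hc', hlift⟩ := Ordinal.lt_lift_iff.mp h1
  refine ⟨c', hc', fun x => ?_, fun x => ?_⟩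
  · rw [← Hseq_lift E acc G0 c' x, hlift, Hseq_lift E acc G0 c x]
  · rw [← Gseq_lift E acc G0 c', hlift, Gseq_lift E acc G0 c]

/-- If `z ∈ H c` and `y ∉ G c` for some stage `c < ω²` (in any universe), then
`rank y ≤ rank z` (computed in any other universe). -/
lemma rank_le_rank_of_stage (y z : V) (c : Ordinal.{u}) (hc : c < omega0 * omega0)
    (hz : z ∈ Hseq E acc G0 c) (hy : y ∉ Gseq E acc G0 c) :
    rankOf.{_, v} E acc G0 y ≤ rankOf.{_, v} E acc G0 z := by
  obtain ⟨c', hc', hHiff, hGiff⟩ :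
      ∃ c' : Ordinal.{v}, c' < omega0 * omega0 ∧
        (∀ x : V, x ∈ Hseq E acc G0 c' ↔ x ∈ Hseq E acc G0 c) ∧
        (∀ x : V, x ∈ Gseq E acc G0 c' ↔ x ∈ Gseq E acc G0 c) :=
    stage_transfer E acc G0 c hc
  exact le_trans
    (rank_le_of_not_mem E acc G0 y c' (fun hm => hy ((hGiff y).mp hm)))
    (rank_ge_of_mem E acc G0 z c' hc' ((hHiff z).mpr hz))

lemma rank_succ_facts (x : V) (α : Ordinal.{u})
    (h : rankOf E acc G0 x = α + 1) (hα : α + 1 < omega0 * omega0) :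
    x ∈ Hseq E acc G0 (α + 1) ∧ x ∉ Gseq E acc G0 (α + 1) := by
  constructor
  · have h1 : α < rankOf E acc G0 x := by rw [h]; exact lt_add_one α
    obtain ⟨b, hb, hab⟩ := exists_lt_of_lt_csSup (rankSet_nonempty E acc G0 x) h1
    have hb1 : b ≤ α + 1 := by
      have hle : b ≤ rankOf E acc G0 x := le_csSup (rankSet_bdd E acc G0 x) hb
      rwa [h] at hle
    have : b = α + 1 :=
      le_antisymm hb1 (by rwa [Ordinal.add_one_eq_succ, Order.succ_le_iff])
    exact this ▸ hb.2
  · intro hG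
    have hH : x ∈ Hseq E acc G0 (α + 1 + 1) := by
      intro β hβ
      have : β ≤ α + 1 := by
        rwa [Ordinal.add_one_eq_succ, Order.lt_succ_iff] at hβ
      exact Gseq_anti E acc G0 (α + 1) β this hG
    have hlt2 : α + 1 + 1 < omega0 * omega0 := by
      have hlim : Order.IsSuccLimit ((omega0 : Ordinal.{u}) * omega0) :=
        Ordinal.isSuccLimit_mul_right omega0_pos isSuccLimit_omega0
      rw [Ordinal.add_one_eq_succ]
      exact hlim.succ_lt hα
    have := rank_ge_of_mem E acc G0 x (α + 1 + 1) hlt2 hH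
    rw [h] at this
    exact absurd this (by simp)

lemma ofloor_le_of_forall {α l : Ordinal.{u}}
    (h : ∀ x, (x = 0 ∨ Order.IsSuccLimit x) → x < α → x ≤ l) (h0 : 0 < α) :
    ofloor α ≤ l :=
  csSup_le ⟨0, Or.inl rfl, h0⟩ (fun x hx => h x hx.1 hx.2)

/-- The core construction: from a vertex of rank `α + 1`, a maximal path (with the
maximality of each step witnessed by a stage `c < ω²`) ending at a vertex of rank
`l + 1` with `l` limit (or zero) and `ofloor (α + 1) ≤ l`. -/
lemma main_aux (α : Ordinal.{u}) : ∀ v : V, rankOf E acc G0 v = α + 1 →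
    α + 1 < omega0 * omega0 →
    ∃ (n : ℕ) (ρ : ℕ → V), ρ 0 = v ∧
      (∀ i < n, E (ρ i) (ρ (i + 1)) ∧
        ∃ c : Ordinal.{u}, c < omega0 * omega0 ∧ ρ (i + 1) ∈ Hseq E acc G0 c ∧
          ∀ u', E (ρ i) u' → u' ∉ Gseq E acc G0 c) ∧
      ∃ l : Ordinal.{u}, (l = 0 ∨ Order.IsSuccLimit l) ∧
        rankOf E acc G0 (ρ n) = l + 1 ∧ ofloor (α + 1) ≤ l := by
  induction α using Ordinal.induction with
  | h α IH =>
    intro v hrk hlt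
    rcases Ordinal.zero_or_succ_or_isSuccLimit α with h0 | ⟨γ, rfl⟩ | hlim
    · refine ⟨0, fun _ => v, rfl, by omega, α, Or.inl h0, hrk, ?_⟩
      refine ofloor_le_of_forall (fun x _ hx => ?_)
        (lt_of_le_of_lt zero_le (lt_add_one _))
      rwa [Ordinal.add_one_eq_succ, Order.lt_succ_iff] at hx
    · -- `α = γ + 1` is a successor
      rw [← Ordinal.add_one_eq_succ] at hrk hlt ⊢
      obtain ⟨hH, hnG⟩ := rank_succ_facts E acc G0 v _ hrk hlt
      have hGα : v ∈ Gseq E acc G0 (γ + 1) := hH _ (lt_add_one _)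
      rw [Gseq_succ] at hGα
      obtain ⟨hGγ, u, hEu, huγ⟩ := hGα
      have hno : ∀ u', E v u' → u' ∉ Gseq E acc G0 (γ + 1) := by
        intro u' hE hu'
        rw [Gseq_succ] at hnG
        exact hnG ⟨hH _ (lt_add_one _), u', hE, hu'⟩
      have hγ1lt : γ + 1 < omega0 * omega0 := lt_trans (lt_add_one _) hlt
      have huH : u ∈ Hseq E acc G0 (γ + 1) := by
        intro β hβ
        have : β ≤ γ := by rwa [Ordinal.add_one_eq_succ, Order.lt_succ_iff] at hβ
        exact Gseq_anti E acc G0 γ β this huγ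
      have hranku : rankOf E acc G0 u = γ + 1 :=
        le_antisymm (rank_le_of_not_mem E acc G0 u _ (hno u hEu))
          (rank_ge_of_mem E acc G0 u _ hγ1lt huH)
      obtain ⟨n', ρ', hρ0, hpath, l, hl, hend, hfl⟩ :=
        IH γ (lt_add_one _) u hranku hγ1lt
      refine ⟨n' + 1, fun i => match i with | 0 => v | (j+1) => ρ' j, rfl, ?_, l, hl, ?_, ?_⟩
      · intro i hi
        rcases i with _ | j
        · exact ⟨by simpa [hρ0] using hEu, γ + 1, hγ1lt, by simpa [hρ0] using huH, hno⟩
        · exact hpath j (by omega)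
      · exact hend
      · refine le_trans (ofloor_le_of_forall (fun x hx hxlt => ?_)
          (lt_of_le_of_lt zero_le (lt_add_one _))) hfl
        have hx1 : x ≤ γ + 1 := by
          rwa [Ordinal.add_one_eq_succ (γ + 1), Order.lt_succ_iff] at hxlt
        have hxne : x ≠ γ + 1 := by
          rintro rfl
          rcases hx with h0 | hlim
          · exact Ordinal.succ_ne_zero γ (by rwa [Ordinal.add_one_eq_succ] at h0)
          · exact Order.not_isSuccLimit_succ γ (by rwa [Ordinal.add_one_eq_succ] at hlim)
        exact le_csSup ⟨γ + 1, fun y hy => hy.2.le⟩ ⟨hx, lt_of_le_of_ne hx1 hxne⟩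
    · refine ⟨0, fun _ => v, rfl, by omega, α, Or.inr hlim, hrk, ?_⟩
      refine ofloor_le_of_forall (fun x _ hx => ?_)
        (lt_of_le_of_lt zero_le (lt_add_one _))
      rwa [Ordinal.add_one_eq_succ, Order.lt_succ_iff] at hx

end AuxLemmas

open Ordinal in
/-- If a vertex has successor-ordinal rank `α + 1`, then some maximal path from it (each
step going to a successor of maximal rank) ends in a vertex of rank `l + 1` for a limit
ordinal `l` (0 counting as a limit) with `floor (α + 1) ≤ l`. -/
theorem stmt5 {Q A : Type*} [Finite Q] (Δ : Q → A → Q → Prop) (w : ℕ → A)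
    (F : Set Q) (q0 : Q) (v : Q × ℕ) (hv : v ∈ runDag Δ w q0)
    (α : Ordinal)
    (hrk : rankOf (dagEdge Δ w) (dagAcc F) (runDag Δ w q0) v = α + 1)
    (hlt : α + 1 < omega0 * omega0) :
    ∃ (n : ℕ) (ρ : ℕ → Q × ℕ), ρ 0 = v ∧
      (∀ i < n, dagEdge Δ w (ρ i) (ρ (i + 1)) ∧
        ∀ u, dagEdge Δ w (ρ i) u →
          rankOf (dagEdge Δ w) (dagAcc F) (runDag Δ w q0) u ≤
            rankOf (dagEdge Δ w) (dagAcc F) (runDag Δ w q0) (ρ (i + 1))) ∧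
      ∃ l : Ordinal, (l = 0 ∨ Order.IsSuccLimit l) ∧
        rankOf (dagEdge Δ w) (dagAcc F) (runDag Δ w q0) (ρ n) = l + 1 ∧
        ofloor (α + 1) ≤ l := by
  obtain ⟨n, ρ, hρ0, hpath, l, hl, hend, hfl⟩ :=
    main_aux (dagEdge Δ w) (dagAcc F) (runDag Δ w q0) α v hrk hlt
  refine ⟨n, ρ, hρ0, fun i hi => ?_, l, hl, hend, hfl⟩
  obtain ⟨hE, c, hc, hH, hG⟩ := hpath i hi
  exact ⟨hE, fun u hu =>
    rank_le_rank_of_stage (dagEdge Δ w) (dagAcc F) (runDag Δ w q0) u (ρ (i + 1))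
      c hc hH (hG u hu)⟩
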